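/- Let S_n ∈ ℂ[u] be the Chebyshev polynomials of the second kind, defined by S_0 = 1, S_1 = u, and S_{n+1} = u·S_n − S_{n−1}. Then for every n ≥ 0, the symmetric Laurent polynomial S_n(X + X⁻¹) = Σ_{k=0}^{n} X^{n−2k} is an eigenfunction of the Macdonald operator at the specialization t = −q²: L_{q,−q²}(S_n(X + X⁻¹)) = −(q^{2n+2} + q^{−2n−2})·S_n(X + X⁻¹). (That is, at t = −q² the Macdonald polynomials of type A_1 specialize to the Chebyshev polynomials S_n.) -/
import Mathlib


noncomputable section

/-- The Chebyshev polynomials of the second kind: `S 0 = 1`, `S 1 = u`,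
`S (n+2) = u·S (n+1) - S n`. -/
def chebS : ℕ → Polynomial ℂ
  | 0 => 1
  | 1 => Polynomial.X
  | n + 2 => Polynomial.X * chebS (n + 1) - chebS n

open LaurentPolynomial Finset in
lemma sumform (n : ℕ) :
    Polynomial.aeval (T 1 + T (-1) : LaurentPolynomial ℂ) (chebS n) =
      ∑ k ∈ Finset.range (n + 1), T ((n : ℤ) - 2 * (k : ℤ)) := by
  induction n using chebS.induct with
  | case1 => simp [chebS]
  | case2 => simp [chebS, Finset.sum_range_succ]
  | case3 n ih1 ih2 =>
    rw [chebS, map_sub, map_mul, ih1, ih2, Polynomial.aeval_X]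
    rw [add_mul, Finset.mul_sum, Finset.mul_sum]
    simp only [← T_add]
    push_cast
    have e1 : (∑ x ∈ range (n + 1 + 1), T (1 + ((n:ℤ) + 1 - 2 * (x:ℤ))) : LaurentPolynomial ℂ)
        = ∑ x ∈ range (n + 1 + 1), T ((n:ℤ) + 1 + 1 - 2 * (x:ℤ)) := by
      refine Finset.sum_congr rfl fun k _ => ?_
      congr 1; ring
    have e2 : (∑ x ∈ range (n + 1 + 1), T (-1 + ((n:ℤ) + 1 - 2 * (x:ℤ))) : LaurentPolynomial ℂ)
        = ∑ x ∈ range (n + 1 + 1), T ((n:ℤ) - 2 * (x:ℤ)) := by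
      refine Finset.sum_congr rfl fun k _ => ?_
      congr 1; ring
    rw [e1, e2, Finset.sum_range_succ (fun x => T ((n:ℤ) - 2 * (x:ℤ))) (n+1),
      Finset.sum_range_succ (fun x => T ((n:ℤ) + 1 + 1 - 2 * (x:ℤ))) (n+2)]
    push_cast
    have e3 : (T ((n:ℤ) + 1 + 1 - 2 * ((n:ℤ) + 2)) : LaurentPolynomial ℂ)
        = T ((n:ℤ) - 2 * ((n:ℤ) + 1)) := by congr 1; ring
    rw [e3]
    ring

open LaurentPolynomial in
lemma termwise (q : ℂ) (hq : q ≠ 0) (m : ℤ) :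
    ((-q ^ 2) • (T (-1) : LaurentPolynomial ℂ) - (-q ^ 2)⁻¹ • T 1) * (q ^ (-2 * m) • T m) +
      ((-q ^ 2)⁻¹ • T (-1) - (-q ^ 2) • T 1) * (q ^ (2 * m) • T m) =
    (q ^ (2 * m + 2) + q ^ (-(2 * m + 2))) • T (m + 1)
      - (q ^ (2 * (m - 1)) + q ^ (-(2 * (m - 1)))) • T (m - 1) := by
  have hinv : (-q ^ 2)⁻¹ = -q ^ (-2 : ℤ) := by
    rw [zpow_neg, ← inv_neg]
    norm_cast
  rw [hinv]
  have hm1 : (T (m - 1) : LaurentPolynomial ℂ) = T (-1) * T m := by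
    rw [← T_add]; congr 1; ring
  have hp1 : (T (m + 1) : LaurentPolynomial ℂ) = T 1 * T m := by
    rw [← T_add]; congr 1; ring
  rw [hm1, hp1]
  rw [sub_mul, sub_mul, smul_mul_smul_comm, smul_mul_smul_comm, smul_mul_smul_comm,
    smul_mul_smul_comm]
  rw [sub_add_sub_comm, ← add_smul, ← add_smul]
  set a : ℂ := q ^ (2 * m) with ha
  have ha0 : a ≠ 0 := zpow_ne_zero _ hq
  have hq2 : (q : ℂ) ^ (2 : ℕ) ≠ 0 := pow_ne_zero _ hq
  have h1 : q ^ (-2 * m) = a⁻¹ := by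
    rw [ha, ← zpow_neg]; congr 1; ring
  have h2 : q ^ (-2 : ℤ) = (q ^ (2:ℕ))⁻¹ := by
    rw [← zpow_natCast q 2, ← zpow_neg]
    norm_num
  have h3 : q ^ (2 * m + 2) = a * q ^ (2:ℕ) := by
    rw [ha, ← zpow_natCast q 2, ← zpow_add₀ hq]
    norm_num
  have h4 : q ^ (-(2 * m + 2)) = (a * q ^ (2:ℕ))⁻¹ := by
    rw [← h3, ← zpow_neg]
  have h5 : q ^ (2 * (m - 1)) = a * (q ^ (2:ℕ))⁻¹ := by
    rw [ha, ← zpow_natCast q 2, ← zpow_neg, ← zpow_add₀ hq]; congr 1; push_cast; ring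
  have h6 : q ^ (-(2 * (m - 1))) = (a * (q ^ (2:ℕ))⁻¹)⁻¹ := by
    rw [← h5, ← zpow_neg]
  rw [h1, h2, h3, h4, h5, h6]
  have c1 : -q ^ 2 * a⁻¹ + -(q ^ (2:ℕ))⁻¹ * a = -(a * (q ^ (2:ℕ))⁻¹ + (a * (q ^ (2:ℕ))⁻¹)⁻¹) := by
    rw [mul_inv, inv_inv]
    ring
  have c2 : -(q ^ (2:ℕ))⁻¹ * a⁻¹ + -q ^ 2 * a = -(a * q ^ (2:ℕ) + (a * q ^ (2:ℕ))⁻¹) := by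
    rw [mul_inv]
    ring
  rw [c1, c2, neg_smul, neg_smul]
  abel

open LaurentPolynomial in
/-- At the specialization `t = -q²`, the Macdonald polynomials of type `A₁` specialize to the
Chebyshev polynomials of the second kind: `S_n(X + X⁻¹) = Σ_{k=0}^{n} X^{n-2k}` and
`L_{q,-q²}(S_n(X + X⁻¹)) = -(q^{2n+2} + q^{-2n-2})·S_n(X + X⁻¹)` (the eigen-equation is
stated multiplied through by `X⁻¹ - X`; `yhm : f(X) ↦ f(q⁻²X)`, `yhp : f(X) ↦ f(q²X)`). -/
theorem chebyshev_eigenfunction_macdonald (q : ℂ) (hq : q ≠ 0)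
    (yhm yhp : Module.End ℂ (LaurentPolynomial ℂ))
    (hym : ∀ n : ℤ, yhm (T n) = q ^ (-2 * n) • T n)
    (hyp : ∀ n : ℤ, yhp (T n) = q ^ (2 * n) • T n) :
    ∀ n : ℕ,
      Polynomial.aeval (T 1 + T (-1) : LaurentPolynomial ℂ) (chebS n) =
        ∑ k ∈ Finset.range (n + 1), T ((n : ℤ) - 2 * (k : ℤ)) ∧
      ((-q ^ 2) • T (-1) - (-q ^ 2)⁻¹ • T 1) *
            yhm (Polynomial.aeval (T 1 + T (-1) : LaurentPolynomial ℂ) (chebS n)) +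
          ((-q ^ 2)⁻¹ • T (-1) - (-q ^ 2) • T 1) *
            yhp (Polynomial.aeval (T 1 + T (-1) : LaurentPolynomial ℂ) (chebS n)) =
        (-(q ^ (2 * (n : ℤ) + 2) + q ^ (-2 * (n : ℤ) - 2))) •
          ((T (-1) - T 1) *
            Polynomial.aeval (T 1 + T (-1) : LaurentPolynomial ℂ) (chebS n)) := by
  intro n
  refine ⟨sumform n, ?_⟩
  rw [sumform n, map_sum, map_sum]
  simp only [hym, hyp]
  rw [Finset.mul_sum, Finset.mul_sum, ← Finset.sum_add_distrib, Finset.mul_sum]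
  set f : ℕ → LaurentPolynomial ℂ := fun k =>
    (q ^ (2 * ((n:ℤ) - 2 * (k:ℤ)) + 2) + q ^ (-(2 * ((n:ℤ) - 2 * (k:ℤ)) + 2))) •
      T ((n:ℤ) - 2 * (k:ℤ) + 1) with hf
  set g : ℕ → LaurentPolynomial ℂ := fun k => T ((n:ℤ) - 2 * (k:ℤ) + 1) with hg
  have hL : ∀ k ∈ Finset.range (n+1),
      ((-q ^ 2) • (T (-1) : LaurentPolynomial ℂ) - (-q ^ 2)⁻¹ • T 1) *
          (q ^ (-2 * ((n:ℤ) - 2 * (k:ℤ))) • T ((n:ℤ) - 2 * (k:ℤ))) +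
        ((-q ^ 2)⁻¹ • T (-1) - (-q ^ 2) • T 1) *
          (q ^ (2 * ((n:ℤ) - 2 * (k:ℤ))) • T ((n:ℤ) - 2 * (k:ℤ))) = f k - f (k+1) := by
    intro k _
    rw [termwise q hq ((n:ℤ) - 2 * (k:ℤ))]
    simp only [hf]
    push_cast
    ring_nf
  have hR : ∀ k ∈ Finset.range (n+1),
      ((T (-1) : LaurentPolynomial ℂ) - T 1) * T ((n:ℤ) - 2 * (k:ℤ)) = g (k+1) - g k := by
    intro k _
    rw [sub_mul, ← T_add, ← T_add]
    simp only [hg]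
    push_cast
    ring_nf
  rw [Finset.sum_congr rfl hL, Finset.sum_congr rfl hR,
    Finset.sum_range_sub' f (n+1), Finset.sum_range_sub g (n+1)]
  have F0 : f 0 = (q ^ (2 * (n:ℤ) + 2) + q ^ (-2 * (n:ℤ) - 2)) • T ((n:ℤ) + 1) := by
    simp only [hf]; push_cast; ring_nf
  have FN : f (n+1) = (q ^ (2 * (n:ℤ) + 2) + q ^ (-2 * (n:ℤ) - 2)) • T (-((n:ℤ) + 1)) := by
    simp only [hf]; push_cast; ring_nf
  have G0 : g 0 = T ((n:ℤ) + 1) := by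
    simp only [hg]; push_cast; ring_nf
  have GN : g (n+1) = T (-((n:ℤ) + 1)) := by
    simp only [hg]; push_cast; ring_nf
  rw [F0, FN, G0, GN, neg_smul, smul_sub]
  abel
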